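/- Let f be a square-integrable function on the circle 𝕋 = AddCircle (2π). Then for every n ≥ 1 and all 0 ≤ j, k < n, the (j,k) entry of the matrix T_n(|f|²) − T_n(f)·T_n(f̄) equals Σ_{m=1}^{∞} f̂(j+m)·conj(f̂(k+m)) + Σ_{m=0}^{∞} f̂(j−n−m)·conj(f̂(k−n−m)), where both series converge absolutely; in particular T_n(|f|²) − T_n(f)·T_n(f̄) is the sum of two positive semidefinite Gram matrices. -/

import Mathlib

set_option maxHeartbeats 1000000


open MeasureTheory Matrix AddCircle
open scoped Real ComplexOrder

noncomputable section

instance : Fact (0 < 2 * Real.pi) := ⟨by positivity⟩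

/-- The circle of circumference `2π`. -/
abbrev 𝕋 : Type := AddCircle (2 * Real.pi)

/-- The `n × n` Toeplitz matrix of `f`, with `(i,j)` entry the Fourier coefficient
`f̂(i - j)`. -/
def toeplitz (n : ℕ) (f : 𝕋 → ℂ) : Matrix (Fin n) (Fin n) ℂ :=
  Matrix.of fun i j : Fin n => fourierCoeff f (((i : ℕ) : ℤ) - ((j : ℕ) : ℤ))

/-- The operator (spectral) norm of a complex `n × n` matrix. -/
def opNorm {n : ℕ} (A : Matrix (Fin n) (Fin n) ℂ) : ℝ :=
  ‖Matrix.toEuclideanCLM (𝕜 := ℂ) A‖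

/-- A sequence of matrices `{Aₙ}` converges to the zero sequence in Type 2 strong
cluster sense: for every `ε > 0` there are `N₁, N₂` such that for `n > N₂` one can
split `Aₙ = Rₙ + Eₙ` with `rank Rₙ ≤ N₁` and `‖Eₙ‖ < ε`. -/
def Type2StrongCluster (A : ∀ n : ℕ, Matrix (Fin n) (Fin n) ℂ) : Prop :=
  ∀ ε > (0 : ℝ), ∃ N₁ N₂ : ℕ, ∀ n : ℕ, N₂ < n →
    ∃ R E : Matrix (Fin n) (Fin n) ℂ, A n = R + E ∧ R.rank ≤ N₁ ∧ opNorm E < ε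

/-- A sequence of Hermitian matrices `{Aₙ}` converges to the zero sequence in Type 1
strong cluster sense: for every `ε > 0` there are `N₁, N₂` such that for `n > N₂`, at
most `N₁` of the eigenvalues of `Aₙ` lie outside `(-ε, ε)`. -/
def Type1StrongCluster (A : ∀ n : ℕ, Matrix (Fin n) (Fin n) ℂ)
    (hA : ∀ n, (A n).IsHermitian) : Prop :=
  ∀ ε > (0 : ℝ), ∃ N₁ N₂ : ℕ, ∀ n : ℕ, N₂ < n →
    {i : Fin n | ε ≤ |(hA n).eigenvalues i|}.ncard ≤ N₁

/-- `f` has vanishing mean oscillation: with `F` the `2π`-periodic lift of `f`, the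
`L²` mean oscillation of `F` over intervals `I` tends to `0` as `|I| → 0`. -/
def VMO (f : 𝕋 → ℂ) : Prop :=
  ∀ ε > (0 : ℝ), ∃ δ > (0 : ℝ), ∀ a b : ℝ, a < b → b - a < δ →
    Real.sqrt ((b - a)⁻¹ *
      ∫ t in a..b, ‖f (t : 𝕋) - (b - a)⁻¹ • ∫ s in a..b, f (s : 𝕋)‖ ^ 2) < ε


lemma fourierCoeff_congr_ae' {f g : 𝕋 → ℂ} (h : f =ᵐ[haarAddCircle] g) (m : ℤ) :
    fourierCoeff f m = fourierCoeff g m := by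
  refine integral_congr_ae ?_
  filter_upwards [h] with t ht
  rw [ht]

lemma fourierCoeff_mul_fourier (f : 𝕋 → ℂ) (l m : ℤ) :
    fourierCoeff (fun t => f t * fourier l t) m = fourierCoeff f (m - l) := by
  refine integral_congr_ae (Filter.Eventually.of_forall fun t => ?_)
  have h1 : (-(m - l)) = -m + l := by ring
  simp only [smul_eq_mul, h1, fourier_add]
  ring

lemma hasSum_widom (f : 𝕋 → ℂ) (hf : MemLp f 2 haarAddCircle) (l : ℤ) :
    HasSum (fun m : ℤ => (starRingEnd ℂ) (fourierCoeff f (m - l)) * fourierCoeff f m)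
      (fourierCoeff (fun x => f x * (starRingEnd ℂ) (f x)) l) := by
  have hfour : MemLp (fun t : 𝕋 => fourier l t) ⊤ haarAddCircle :=
    memLp_top_of_bound (map_continuous (fourier l)).aestronglyMeasurable 1
      (Filter.Eventually.of_forall fun t =>
        le_trans ((fourier l).norm_coe_le_norm t) (by rw [fourier_norm]))
  have hG : MemLp (fun t : 𝕋 => f t * fourier l t) 2 haarAddCircle := by
    have h' : MemLp (f • fun t : 𝕋 => fourier l t) 2 haarAddCircle :=
      hfour.smul (r := 2) hf
    have he : (f • fun t : 𝕋 => fourier l t) = fun t : 𝕋 => f t * fourier l t := by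
      funext t; simp [Pi.smul_apply, smul_eq_mul]
    rwa [he] at h'
  set L := hf.toLp f with hLdef
  set G := hG.toLp _ with hGdef
  have hreprL : ∀ i : ℤ, fourierBasis.repr L i = fourierCoeff f i := fun i => by
    rw [fourierBasis_repr]; exact fourierCoeff_congr_ae' hf.coeFn_toLp i
  have hreprG : ∀ i : ℤ, fourierBasis.repr G i = fourierCoeff f (i - l) := fun i => by
    rw [fourierBasis_repr, fourierCoeff_congr_ae' hG.coeFn_toLp i, fourierCoeff_mul_fourier]
  have hinner : (inner ℂ G L : ℂ) = fourierCoeff (fun x => f x * (starRingEnd ℂ) (f x)) l := by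
    rw [MeasureTheory.L2.inner_def]
    refine integral_congr_ae ?_
    filter_upwards [hG.coeFn_toLp, hf.coeFn_toLp] with t h1 h2
    rw [h1, h2]
    simp only [RCLike.inner_apply, _root_.map_mul, ← fourier_neg, smul_eq_mul]
    ring
  have H := fourierBasis.hasSum_inner_mul_inner G L
  rw [hinner] at H
  have hfun : ∀ i : ℤ,
      (inner ℂ G (fourierBasis i) * inner ℂ (fourierBasis i) L : ℂ)
        = (starRingEnd ℂ) (fourierCoeff f (i - l)) * fourierCoeff f i := by
    intro i
    rw [← fourierBasis.repr_apply_apply L i, ← inner_conj_symm,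
      ← fourierBasis.repr_apply_apply G i, hreprL, hreprG]
  have heq : (fun m : ℤ => (starRingEnd ℂ) (fourierCoeff f (m - l)) * fourierCoeff f m)
      = fun i => inner ℂ G (fourierBasis i) * inner ℂ (fourierBasis i) L :=
    funext fun i => (hfun i).symm
  rw [heq]
  exact H

lemma sq_summable (f : 𝕋 → ℂ) (hf : MemLp f 2 haarAddCircle) :
    Summable (fun m : ℤ => ‖fourierCoeff f m‖ ^ 2) := by
  have H := (hasSum_widom f hf 0).summable
  have h1 : ∀ m : ℤ, (starRingEnd ℂ) (fourierCoeff f (m - 0)) * fourierCoeff f m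
      = ((‖fourierCoeff f m‖ ^ 2 : ℝ) : ℂ) := by
    intro m
    rw [sub_zero, mul_comm, Complex.mul_conj']
    push_cast
    ring
  rw [funext h1] at H
  exact Complex.summable_ofReal.mp H

lemma prod_summable (f : 𝕋 → ℂ) (hf : MemLp f 2 haarAddCircle) (j k : ℤ) :
    Summable (fun s : ℤ =>
      ‖fourierCoeff f (j - s) * (starRingEnd ℂ) (fourierCoeff f (k - s))‖) := by
  have h2 := sq_summable f hf
  have hj : Summable (fun s : ℤ => ‖fourierCoeff f (j - s)‖ ^ 2) :=
    h2.comp_injective (sub_right_injective (b := j))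
  have hk : Summable (fun s : ℤ => ‖fourierCoeff f (k - s)‖ ^ 2) :=
    h2.comp_injective (sub_right_injective (b := k))
  refine Summable.of_nonneg_of_le (fun s => norm_nonneg _) (fun s => ?_)
    (((hj.add hk).div_const 2))
  rw [norm_mul, RCLike.norm_conj]
  set a := ‖fourierCoeff f (j - s)‖
  set b := ‖fourierCoeff f (k - s)‖
  have ha : 0 ≤ a := norm_nonneg _
  have hb : 0 ≤ b := norm_nonneg _
  nlinarith [sq_nonneg (a - b)]

lemma posSemidef_gram {n : ℕ} (c : Fin n → ℕ → ℂ)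
    (h : ∀ j k : Fin n, Summable fun m : ℕ => c j m * (starRingEnd ℂ) (c k m)) :
    (Matrix.of fun j k : Fin n =>
      ∑' m : ℕ, c j m * (starRingEnd ℂ) (c k m)).PosSemidef := by
  haveI := Complex.orderClosedTopology
  rw [Matrix.posSemidef_iff_dotProduct_mulVec]
  constructor
  · ext j k
    simp only [Matrix.conjTranspose_apply, Matrix.of_apply]
    rw [tsum_star]
    refine tsum_congr fun m => ?_
    simp only [star_mul', RCLike.star_def, Complex.conj_conj]
    ring
  · intro x
    have hterm : ∀ j k : Fin n, Summable fun m : ℕ =>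
        ((starRingEnd ℂ) (x j) * c j m) * (starRingEnd ℂ) ((starRingEnd ℂ) (x k) * c k m) := by
      intro j k
      refine ((h j k).mul_left ((starRingEnd ℂ) (x j) * x k)).congr fun m => ?_
      simp only [_root_.map_mul, RingHom.id_apply, starRingEnd_self_apply]
      ring
    have key : star x ⬝ᵥ ((Matrix.of fun j k : Fin n =>
          ∑' m : ℕ, c j m * (starRingEnd ℂ) (c k m)) *ᵥ x)
        = ∑' m : ℕ, (∑ j : Fin n, (starRingEnd ℂ) (x j) * c j m) *
            (starRingEnd ℂ) (∑ k : Fin n, (starRingEnd ℂ) (x k) * c k m) := by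
      simp only [dotProduct, Matrix.mulVec, Matrix.of_apply, Pi.star_apply, RCLike.star_def]
      have h1 : ∀ j : Fin n, (starRingEnd ℂ) (x j) *
          (∑ k : Fin n, (∑' m : ℕ, c j m * (starRingEnd ℂ) (c k m)) * x k)
          = ∑' m : ℕ, ∑ k : Fin n,
              ((starRingEnd ℂ) (x j) * c j m) * (starRingEnd ℂ) ((starRingEnd ℂ) (x k) * c k m) := by
        intro j
        rw [Summable.tsum_finsetSum fun k _ => hterm j k]
        rw [Finset.mul_sum]
        refine Finset.sum_congr rfl fun k _ => ?_
        rw [← tsum_mul_right, ← tsum_mul_left]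
        refine tsum_congr fun m => ?_
        simp only [_root_.map_mul, starRingEnd_self_apply]
        ring
      simp only [h1]
      rw [← Summable.tsum_finsetSum fun j _ => summable_sum fun k _ => hterm j k]
      refine tsum_congr fun m => ?_
      rw [map_sum, Finset.sum_mul_sum]
    rw [key]
    refine tsum_nonneg fun m => ?_
    rw [Complex.mul_conj']
    have : ((‖∑ j : Fin n, (starRingEnd ℂ) (x j) * c j m‖ : ℂ)) ^ 2
        = ((‖∑ j : Fin n, (starRingEnd ℂ) (x j) * c j m‖ ^ 2 : ℝ) : ℂ) := by
      push_cast; ring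
    rw [this]
    exact Complex.zero_le_real.mpr (sq_nonneg _)

def negEquiv : ℕ ≃ {s : ℤ | s < 0} where
  toFun := fun m => ⟨-1 - (m : ℤ), by simp only [Set.mem_setOf_eq]; omega⟩
  invFun := fun x => (-1 - x.1).toNat
  left_inv := fun m => by simp only []; omega
  right_inv := fun x => Subtype.ext (by
    have := x.2; simp only [Set.mem_setOf_eq] at this; simp only []; omega)

def geEquiv (n : ℕ) : ℕ ≃ {s : ℤ | (n : ℤ) ≤ s} where
  toFun := fun m => ⟨(n : ℤ) + m, by simp only [Set.mem_setOf_eq]; omega⟩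
  invFun := fun x => (x.1 - n).toNat
  left_inv := fun m => by simp only []; omega
  right_inv := fun x => Subtype.ext (by
    have := x.2; simp only [Set.mem_setOf_eq] at this; simp only []; omega)

lemma tsum_int_split (n : ℕ) (b : ℤ → ℂ) (hb : Summable b) :
    ∑' s : ℤ, b s = (∑ i : Fin n, b ((i : ℕ) : ℤ))
      + ((∑' m : ℕ, b (-1 - (m : ℤ))) + ∑' m : ℕ, b ((n : ℤ) + (m : ℤ))) := by
  classical
  set F : Finset ℤ := Finset.image (fun i : Fin n => ((i : ℕ) : ℤ)) Finset.univ with hF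
  have hsumF : ∑ x ∈ F, b x = ∑ i : Fin n, b ((i : ℕ) : ℤ) :=
    Finset.sum_image (fun a _ a' _ h => Fin.ext (by exact_mod_cast h))
  have h1 := Summable.sum_add_tsum_compl (s := F) hb
  have hset : (↑F : Set ℤ)ᶜ = {s : ℤ | s < 0} ∪ {s : ℤ | (n : ℤ) ≤ s} := by
    ext s
    simp only [Set.mem_compl_iff, hF, Finset.coe_image, Finset.coe_univ, Set.image_univ,
      Set.mem_range, Set.mem_union, Set.mem_setOf_eq, not_exists]
    constructor
    · intro h
      by_contra h'
      push_neg at h'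
      obtain ⟨h1', h2'⟩ := h'
      exact h ⟨s.toNat, by omega⟩ (by simp; omega)
    · rintro h ⟨i, hi⟩ rfl
      have := hi
      omega
  rw [hset] at h1
  have hA : Summable ((b ∘ (↑)) : {s : ℤ | s < 0} → ℂ) := hb.subtype _
  have hB : Summable ((b ∘ (↑)) : {s : ℤ | (n : ℤ) ≤ s} → ℂ) := hb.subtype _
  have hdisj : Disjoint {s : ℤ | s < 0} {s : ℤ | (n : ℤ) ≤ s} :=
    Set.disjoint_left.mpr fun s hs hs' => by
      simp only [Set.mem_setOf_eq] at hs hs'; omega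
  rw [Summable.tsum_union_disjoint hdisj hA hB] at h1
  
  have hAe : ∑' (x : {s : ℤ | s < 0}), b x = ∑' m : ℕ, b (-1 - (m : ℤ)) :=
    ((negEquiv.tsum_eq (fun x : {s : ℤ | s < 0} => b x)).symm.trans (tsum_congr fun m => rfl))
  have hBe : ∑' (x : {s : ℤ | (n : ℤ) ≤ s}), b x = ∑' m : ℕ, b ((n : ℤ) + (m : ℤ)) :=
    (((geEquiv n).tsum_eq (fun x : {s : ℤ | (n : ℤ) ≤ s} => b x)).symm.trans (tsum_congr fun m => rfl))
  rw [hsumF, hAe, hBe] at h1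
  exact h1.symm


/-- equation (1) of the paper, Widom's identity for `g = f̄`: for
`f ∈ L²(𝕋)` and `n ≥ 1`, the `(j,k)` entry of `Tₙ(|f|²) − Tₙ(f)·Tₙ(f̄)` equals
`∑_{m≥1} f̂(j+m)·conj(f̂(k+m)) + ∑_{m≥0} f̂(j−n−m)·conj(f̂(k−n−m))`, both series
converging absolutely; in particular the matrix is the sum of the two positive
semidefinite Gram matrices formed by these series.  Here `Tₙ(f̄) = (Tₙ f)ᴴ` and
`|f|² = f·f̄`. -/
theorem widom_identity_self (f : 𝕋 → ℂ)
    (hf : MemLp f 2 haarAddCircle) (n : ℕ) (hn : 1 ≤ n) :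
    (∀ j k : Fin n,
      Summable (fun m : ℕ =>
        ‖fourierCoeff f (((j : ℕ) : ℤ) + (m : ℤ) + 1) *
          (starRingEnd ℂ) (fourierCoeff f (((k : ℕ) : ℤ) + (m : ℤ) + 1))‖) ∧
      Summable (fun m : ℕ =>
        ‖fourierCoeff f (((j : ℕ) : ℤ) - (n : ℤ) - (m : ℤ)) *
          (starRingEnd ℂ) (fourierCoeff f (((k : ℕ) : ℤ) - (n : ℤ) - (m : ℤ)))‖)) ∧
    toeplitz n (fun x => f x * (starRingEnd ℂ) (f x))
        - toeplitz n f * (toeplitz n f)ᴴ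
      = (Matrix.of fun j k : Fin n =>
          ∑' m : ℕ, fourierCoeff f (((j : ℕ) : ℤ) + (m : ℤ) + 1) *
            (starRingEnd ℂ) (fourierCoeff f (((k : ℕ) : ℤ) + (m : ℤ) + 1)))
        + (Matrix.of fun j k : Fin n =>
          ∑' m : ℕ, fourierCoeff f (((j : ℕ) : ℤ) - (n : ℤ) - (m : ℤ)) *
            (starRingEnd ℂ) (fourierCoeff f (((k : ℕ) : ℤ) - (n : ℤ) - (m : ℤ)))) ∧
    (Matrix.of fun j k : Fin n =>
        ∑' m : ℕ, fourierCoeff f (((j : ℕ) : ℤ) + (m : ℤ) + 1) *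
          (starRingEnd ℂ) (fourierCoeff f (((k : ℕ) : ℤ) + (m : ℤ) + 1))).PosSemidef ∧
    (Matrix.of fun j k : Fin n =>
        ∑' m : ℕ, fourierCoeff f (((j : ℕ) : ℤ) - (n : ℤ) - (m : ℤ)) *
          (starRingEnd ℂ) (fourierCoeff f (((k : ℕ) : ℤ) - (n : ℤ) - (m : ℤ)))).PosSemidef := by
  
  have hsum1 : ∀ j k : Fin n, Summable (fun m : ℕ =>
      ‖fourierCoeff f (((j : ℕ) : ℤ) + (m : ℤ) + 1) *
        (starRingEnd ℂ) (fourierCoeff f (((k : ℕ) : ℤ) + (m : ℤ) + 1))‖) := by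
    intro j k
    have hinj : Function.Injective (fun m : ℕ => (-1 : ℤ) - m) := fun p q h => by
      simp only [] at h; omega
    refine ((prod_summable f hf ((j : ℕ) : ℤ) ((k : ℕ) : ℤ)).comp_injective hinj).congr
      fun m => ?_
    simp only [Function.comp_apply]
    have h1 : ((j : ℕ) : ℤ) - (-1 - (m : ℤ)) = ((j : ℕ) : ℤ) + (m : ℤ) + 1 := by ring
    have h2 : ((k : ℕ) : ℤ) - (-1 - (m : ℤ)) = ((k : ℕ) : ℤ) + (m : ℤ) + 1 := by ring
    rw [h1, h2]
  have hsum2 : ∀ j k : Fin n, Summable (fun m : ℕ =>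
      ‖fourierCoeff f (((j : ℕ) : ℤ) - (n : ℤ) - (m : ℤ)) *
        (starRingEnd ℂ) (fourierCoeff f (((k : ℕ) : ℤ) - (n : ℤ) - (m : ℤ)))‖) := by
    intro j k
    have hinj : Function.Injective (fun m : ℕ => (n : ℤ) + m) := fun p q h => by
      simp only [] at h; omega
    refine ((prod_summable f hf ((j : ℕ) : ℤ) ((k : ℕ) : ℤ)).comp_injective hinj).congr
      fun m => ?_
    simp only [Function.comp_apply]
    have h1 : ((j : ℕ) : ℤ) - ((n : ℤ) + (m : ℤ)) = ((j : ℕ) : ℤ) - (n : ℤ) - (m : ℤ) := by ring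
    have h2 : ((k : ℕ) : ℤ) - ((n : ℤ) + (m : ℤ)) = ((k : ℕ) : ℤ) - (n : ℤ) - (m : ℤ) := by ring
    rw [h1, h2]
  refine ⟨fun j k => ⟨hsum1 j k, hsum2 j k⟩, ?_,
    posSemidef_gram (fun j m => fourierCoeff f (((j : ℕ) : ℤ) + (m : ℤ) + 1))
      (fun j k => (hsum1 j k).of_norm),
    posSemidef_gram (fun j m => fourierCoeff f (((j : ℕ) : ℤ) - (n : ℤ) - (m : ℤ)))
      (fun j k => (hsum2 j k).of_norm)⟩
  ext j k
  set J := ((j : ℕ) : ℤ) with hJ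
  set K := ((k : ℕ) : ℤ) with hK
  set b : ℤ → ℂ := fun s =>
    fourierCoeff f (J - s) * (starRingEnd ℂ) (fourierCoeff f (K - s)) with hbdef
  have hb : Summable b := (prod_summable f hf J K).of_norm
  have hw := hasSum_widom f hf (J - K)
  have hw2 : HasSum b (fourierCoeff (fun x => f x * (starRingEnd ℂ) (f x)) (J - K)) := by
    have h3 : ((fun m : ℤ =>
        (starRingEnd ℂ) (fourierCoeff f (m - (J - K))) * fourierCoeff f m)
          ∘ (Equiv.subLeft J)) = b := by
      funext s
      show (starRingEnd ℂ) (fourierCoeff f (J - s - (J - K))) * fourierCoeff f (J - s) = b s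
      have h4 : J - s - (J - K) = K - s := by ring
      rw [hbdef, h4]; ring
    have h5 := (Equiv.subLeft J).hasSum_iff.mpr hw
    rwa [h3] at h5
  have hT : fourierCoeff (fun x => f x * (starRingEnd ℂ) (f x)) (J - K) = ∑' s : ℤ, b s :=
    hw2.tsum_eq.symm
  have hsplit := tsum_int_split n b hb
  simp only [toeplitz, Matrix.sub_apply, Matrix.add_apply, Matrix.mul_apply,
    Matrix.conjTranspose_apply, Matrix.of_apply]
  have e1 : ∑' m : ℕ, fourierCoeff f (J + (m : ℤ) + 1) *
      (starRingEnd ℂ) (fourierCoeff f (K + (m : ℤ) + 1)) = ∑' m : ℕ, b (-1 - (m : ℤ)) :=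
    tsum_congr fun m => by
      have h1 : J - (-1 - (m : ℤ)) = J + (m : ℤ) + 1 := by ring
      have h2 : K - (-1 - (m : ℤ)) = K + (m : ℤ) + 1 := by ring
      rw [hbdef]
      simp only []
      rw [h1, h2]
  have e2 : ∑' m : ℕ, fourierCoeff f (J - (n : ℤ) - (m : ℤ)) *
      (starRingEnd ℂ) (fourierCoeff f (K - (n : ℤ) - (m : ℤ)))
        = ∑' m : ℕ, b ((n : ℤ) + (m : ℤ)) :=
    tsum_congr fun m => by
      have h1 : J - ((n : ℤ) + (m : ℤ)) = J - (n : ℤ) - (m : ℤ) := by ring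
      have h2 : K - ((n : ℤ) + (m : ℤ)) = K - (n : ℤ) - (m : ℤ) := by ring
      rw [hbdef]
      simp only []
      rw [h1, h2]
  have e3 : ∀ i : Fin n, fourierCoeff f (J - ((i : ℕ) : ℤ)) *
      (starRingEnd ℂ) (fourierCoeff f (K - ((i : ℕ) : ℤ))) = b ((i : ℕ) : ℤ) := fun i => by
    rw [hbdef]
  rw [e1, e2, hT, hsplit]
  have e3' : ∑ x : Fin n, fourierCoeff f (J - ((x : ℕ) : ℤ)) *
      star (fourierCoeff f (K - ((x : ℕ) : ℤ))) = ∑ i : Fin n, b ((i : ℕ) : ℤ) :=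
    Finset.sum_congr rfl fun i _ => by simp [hbdef, RCLike.star_def]
  rw [e3']
  ring
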